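/- Let W:Ω²→[0,1] be a graphon with edge density e = ∫∫ W. Then the fractional vertex cover number satisfies τ*(W) ≥ min{√(e/4), 1 − √(1−e)}. -/

import Mathlib

open MeasureTheory Set

def IsGraphon {Ω : Type*} [MeasurableSpace Ω] (W : Ω → Ω → ℝ) : Prop :=
  Measurable (Function.uncurry W) ∧ (∀ x y, W x y = W y x) ∧ ∀ x y, W x y ∈ Set.Icc (0:ℝ) 1

def IsFracCover {Ω : Type*} [MeasurableSpace Ω] (ν : Measure Ω) (W : Ω → Ω → ℝ)
    (c : Ω → ℝ) : Prop :=
  Measurable c ∧ (∀ x, c x ∈ Set.Icc (0:ℝ) 1) ∧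
    ∀ᵐ p ∂(ν.prod ν), 0 < W p.1 p.2 → 1 ≤ c p.1 + c p.2

/-- The fractional vertex cover number: the infimum of sizes of fractional vertex covers. -/
noncomputable def fracCoverNumber {Ω : Type*} [MeasurableSpace Ω] (ν : Measure Ω)
    (W : Ω → Ω → ℝ) : ℝ :=
  sInf {r : ℝ | ∃ c : Ω → ℝ, IsFracCover ν W c ∧ r = ∫ x, c x ∂ν}

lemma integrable_of_bdd {α : Type*} [MeasurableSpace α] {μ : Measure α} [IsFiniteMeasure μ]
    {f : α → ℝ} (hm : AEStronglyMeasurable f μ) (C : ℝ) (h : ∀ x, ‖f x‖ ≤ C) :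
    Integrable f μ :=
  (integrable_const C).mono' hm (Filter.Eventually.of_forall h)

lemma final_alg (a b z t e : ℝ) (ha : 0 ≤ a) (hb : 0 ≤ b) (hz : 0 ≤ z)
    (hsum : a + b + z = 1) (hab : a + b / 2 ≤ t) (ht0 : 0 ≤ t)
    (hN : e ≤ 1 - z * z - z * b - b * z) :
    min (Real.sqrt (e / 4)) (1 - Real.sqrt (1 - e)) ≤ t := by
  by_contra hcon
  push_neg at hcon
  rw [lt_min_iff] at hcon
  obtain ⟨h1, h2⟩ := hcon
  have hz' : z = 1 - a - b := by linarith
  subst hz'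
  have ht1 : t < 1 := by
    have := Real.sqrt_nonneg (1 - e); linarith
  have h1' : t ^ 2 < e / 4 := (Real.lt_sqrt ht0).mp h1
  have h2' : 1 - e < (1 - t) ^ 2 := (Real.sqrt_lt' (by linarith)).mp (by linarith)
  have hs0 : 0 ≤ 2 * a + b := by linarith
  have hA1 : (2 * a + b) ^ 2 < e := by nlinarith
  have hA2 : 2 * (a + b / 2) - (a + b / 2) ^ 2 < e := by
    nlinarith [mul_nonneg (by linarith : (0:ℝ) ≤ t - (a + b / 2))
      (by linarith : (0:ℝ) ≤ 2 - t - (a + b / 2))]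
  have hx : a * (5 * a + 4 * b - 2) < 0 := by nlinarith
  have hy : b * (4 - 4 * a - 5 * b) < 0 := by nlinarith
  have h5 : 5 * a + 4 * b - 2 < 0 := by
    by_contra hcc; push_neg at hcc; nlinarith [mul_nonneg ha hcc]
  have h4 : 4 - 4 * a - 5 * b < 0 := by
    by_contra hcc; push_neg at hcc; nlinarith [mul_nonneg hb hcc]
  linarith

lemma vol_fact : Fact (MeasureTheory.volume (Set.Ioo (0:ℝ) (1/2)) < ⊤) :=
  ⟨by simp [Real.volume_Ioo]⟩

lemma inner_theta (u : ℝ) (hu0 : 0 ≤ u) (hu1 : u ≤ 1) :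
    ∫ θ in Set.Ioo (0:ℝ) (1/2),
      ((if 1 - θ < u then (1:ℝ) else 0)
        + 1 / 2 * (if u < θ then (0:ℝ) else if u ≤ 1 - θ then 1 else 0)) = u / 2 := by
  haveI := vol_fact
  set m := min u (1 - u) with hm
  have hm0 : 0 ≤ m := le_min hu0 (by linarith)
  have hm2 : m ≤ 1 / 2 := by
    rcases le_total u (1 - u) with h | h
    · rw [hm, min_eq_left h]; linarith
    · rw [hm, min_eq_right h]; linarith
  have e1 : ∀ θ : ℝ, (if 1 - θ < u then (1:ℝ) else 0)
      = (Set.Ioi (1 - u)).indicator (fun _ => (1:ℝ)) θ := by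
    intro θ
    rw [Set.indicator_apply]
    by_cases h : 1 - θ < u
    · rw [if_pos h, if_pos (by simp only [mem_Ioi]; linarith)]
    · rw [if_neg h, if_neg (by simp only [mem_Ioi]; intro hc; exact h (by linarith))]
  have e2 : ∀ θ : ℝ, (if u < θ then (0:ℝ) else if u ≤ 1 - θ then 1 else 0)
      = (Set.Iic m).indicator (fun _ => (1:ℝ)) θ := by
    intro θ
    rw [Set.indicator_apply]
    rcases lt_or_ge u θ with h | h
    · rw [if_pos h, if_neg (by simp only [mem_Iic, hm, le_min_iff]; intro hc; linarith [hc.1])]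
    · rw [if_neg (not_lt.mpr h)]
      rcases le_or_gt u (1 - θ) with h2 | h2
      · rw [if_pos h2, if_pos (by simp only [mem_Iic, hm, le_min_iff]; exact ⟨h, by linarith⟩)]
      · rw [if_neg (not_le.mpr h2),
          if_neg (by simp only [mem_Iic, hm, le_min_iff]; intro hc; linarith [hc.2])]
  simp only [e1, e2]
  have hI1 : Integrable ((Set.Ioi (1 - u)).indicator fun _ => (1:ℝ))
      (volume.restrict (Set.Ioo (0:ℝ) (1/2))) :=
    (integrable_const 1).indicator measurableSet_Ioi
  have hI2 : Integrable ((Set.Iic m).indicator fun _ => (1:ℝ))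
      (volume.restrict (Set.Ioo (0:ℝ) (1/2))) :=
    (integrable_const 1).indicator measurableSet_Iic
  rw [integral_add hI1 (hI2.const_mul _), integral_const_mul,
    integral_indicator_const (1:ℝ) measurableSet_Ioi,
    integral_indicator_const (1:ℝ) measurableSet_Iic, measureReal_def, measureReal_def,
    Measure.restrict_apply measurableSet_Ioi,
    Measure.restrict_apply measurableSet_Iic]
  have hset1 : Set.Ioi (1 - u) ∩ Set.Ioo 0 (1/2) = Set.Ioo (1 - u) (1/2) := by
    ext θ
    simp only [mem_inter_iff, mem_Ioi, mem_Ioo]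
    constructor
    · rintro ⟨h1, _, h3⟩; exact ⟨h1, h3⟩
    · rintro ⟨h1, h2⟩; exact ⟨h1, by linarith, h2⟩
  have hset2 : volume (Set.Iic m ∩ Set.Ioo 0 (1/2)) = ENNReal.ofReal m := by
    apply le_antisymm
    · calc volume (Set.Iic m ∩ Set.Ioo 0 (1/2)) ≤ volume (Set.Ioc 0 m) := by
            apply measure_mono
            rintro θ ⟨h1, h2, _⟩; exact ⟨h2, h1⟩
        _ = ENNReal.ofReal m := by rw [Real.volume_Ioc, sub_zero]
    · calc ENNReal.ofReal m = volume (Set.Ioo 0 m) := by rw [Real.volume_Ioo, sub_zero]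
        _ ≤ volume (Set.Iic m ∩ Set.Ioo 0 (1/2)) := by
            apply measure_mono
            rintro θ ⟨h1, h2⟩
            exact ⟨le_of_lt h2, h1, by linarith⟩
  rw [hset1, hset2, Real.volume_Ioo]
  rcases le_or_gt u (1/2) with h | h
  · have hmu : m = u := min_eq_left (by linarith)
    rw [hmu]
    have : ENNReal.ofReal (1/2 - (1 - u)) = 0 := by
      rw [ENNReal.ofReal_eq_zero]; linarith
    rw [this]
    simp [ENNReal.toReal_ofReal hu0]
    linarith
  · have hmu : m = 1 - u := min_eq_right (by linarith)
    rw [hmu, ENNReal.toReal_ofReal (by linarith), ENNReal.toReal_ofReal (by linarith)]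
    simp
    linarith

lemma tri_ind (θ u : ℝ) (hθ2 : θ < 1/2) :
    (if u < θ then (1:ℝ) else 0) + (if u < θ then (0:ℝ) else if u ≤ 1 - θ then 1 else 0)
      + (if 1 - θ < u then (1:ℝ) else 0) = 1 := by
  split_ifs <;> linarith

lemma master_pt (θ u v w : ℝ) (hθ1 : 0 < θ) (hθ2 : θ < 1/2) (hw : w ≤ 1)
    (hcov : 0 < w → 1 ≤ u + v) :
    w ≤ 1 - (if u < θ then (1:ℝ) else 0) * (if v < θ then (1:ℝ) else 0)
        - (if u < θ then (1:ℝ) else 0) * (if v < θ then (0:ℝ) else if v ≤ 1 - θ then 1 else 0)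
        - (if u < θ then (0:ℝ) else if u ≤ 1 - θ then 1 else 0)
            * (if v < θ then (1:ℝ) else 0) := by
  rcases le_or_gt w 0 with hw' | hw'
  · split_ifs <;> nlinarith
  · have hs := hcov hw'
    split_ifs <;> nlinarith

theorem stmt_9 {Ω : Type*} [MeasurableSpace Ω] (ν : Measure Ω) [IsProbabilityMeasure ν]
    [NullSingletonClass ν] (W : Ω → Ω → ℝ) (hW : IsGraphon W)
    (e : ℝ) (he : e = ∫ p, W p.1 p.2 ∂(ν.prod ν)) :
    min (Real.sqrt (e / 4)) (1 - Real.sqrt (1 - e)) ≤ fracCoverNumber ν W := by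
  haveI := vol_fact
  apply le_csInf
  · exact ⟨1, fun _ => (1:ℝ), ⟨measurable_const, fun x => ⟨zero_le_one, le_refl 1⟩,
      Filter.Eventually.of_forall fun p _ => by norm_num⟩, by simp⟩
  rintro r ⟨c, ⟨hcm, hc01, hcov⟩, rfl⟩
  -- Fubini to find a good threshold θ
  have hmf : Measurable (Function.uncurry fun (θ : ℝ) (x : Ω) =>
      ((if 1 - θ < c x then (1:ℝ) else 0)
        + 1 / 2 * (if c x < θ then (0:ℝ) else if c x ≤ 1 - θ then 1 else 0))) := by
    apply Measurable.add
    · exact Measurable.ite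
        (measurableSet_lt (measurable_const.sub measurable_fst) (hcm.comp measurable_snd))
        measurable_const measurable_const
    · apply Measurable.const_mul
      exact Measurable.ite (measurableSet_lt (hcm.comp measurable_snd) measurable_fst)
        measurable_const
        (Measurable.ite (measurableSet_le (hcm.comp measurable_snd)
          (measurable_const.sub measurable_fst)) measurable_const measurable_const)
  have hfint : Integrable (Function.uncurry fun (θ : ℝ) (x : Ω) =>
      ((if 1 - θ < c x then (1:ℝ) else 0)
        + 1 / 2 * (if c x < θ then (0:ℝ) else if c x ≤ 1 - θ then 1 else 0)))
      ((volume.restrict (Set.Ioo (0:ℝ) (1/2))).prod ν) := by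
    apply integrable_of_bdd hmf.aestronglyMeasurable (3/2)
    intro p
    simp only [Function.uncurry, Real.norm_eq_abs]
    rw [abs_le]
    constructor <;> [skip; skip] <;> split_ifs <;> norm_num
  have hswap := integral_integral_swap hfint
  have hRHS : (∫ x, (∫ θ in Set.Ioo (0:ℝ) (1/2),
      ((if 1 - θ < c x then (1:ℝ) else 0)
        + 1 / 2 * (if c x < θ then (0:ℝ) else if c x ≤ 1 - θ then 1 else 0))) ∂ν)
      = (∫ x, c x ∂ν) / 2 := by
    rw [← integral_div]
    apply integral_congr_ae
    apply Filter.Eventually.of_forall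
    intro x
    exact inner_theta (c x) (hc01 x).1 (hc01 x).2
  have hGint : Integrable (fun θ => ∫ x,
      ((if 1 - θ < c x then (1:ℝ) else 0)
        + 1 / 2 * (if c x < θ then (0:ℝ) else if c x ≤ 1 - θ then 1 else 0)) ∂ν)
      (volume.restrict (Set.Ioo (0:ℝ) (1/2))) := hfint.integral_prod_left
  set t := ∫ x, c x ∂ν with ht_def
  have ht0 : 0 ≤ t := integral_nonneg fun x => (hc01 x).1
  have hex : ∃ θ₀ ∈ Set.Ioo (0:ℝ) (1/2), (∫ x,
      ((if 1 - θ₀ < c x then (1:ℝ) else 0)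
        + 1 / 2 * (if c x < θ₀ then (0:ℝ) else if c x ≤ 1 - θ₀ then 1 else 0)) ∂ν) ≤ t := by
    by_contra hcon
    push_neg at hcon
    have hμne : volume.restrict (Set.Ioo (0:ℝ) (1/2)) ≠ 0 := by
      rw [Ne, Measure.restrict_eq_zero]
      simp [Real.volume_Ioo]
    have huniv : ((volume.restrict (Set.Ioo (0:ℝ) (1/2))) Set.univ).toReal = 1/2 := by
      rw [Measure.restrict_apply_univ, Real.volume_Ioo]
      rw [ENNReal.toReal_ofReal (by norm_num)]
      norm_num
    have hint0 : ∫ θ in Set.Ioo (0:ℝ) (1/2), ((∫ x,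
        ((if 1 - θ < c x then (1:ℝ) else 0)
          + 1 / 2 * (if c x < θ then (0:ℝ) else if c x ≤ 1 - θ then 1 else 0)) ∂ν) - t) = 0 := by
      rw [integral_sub hGint (integrable_const t), integral_const, measureReal_def, huniv]
      have := hswap
      rw [this, hRHS, smul_eq_mul]
      ring
    have hnn : 0 ≤ᵐ[volume.restrict (Set.Ioo (0:ℝ) (1/2))] fun θ => ((∫ x,
        ((if 1 - θ < c x then (1:ℝ) else 0)
          + 1 / 2 * (if c x < θ then (0:ℝ) else if c x ≤ 1 - θ then 1 else 0)) ∂ν) - t) := by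
      filter_upwards [ae_restrict_mem measurableSet_Ioo] with θ hθ
      have := hcon θ hθ
      simp only [Pi.zero_apply]
      linarith
    have hzero := (integral_eq_zero_iff_of_nonneg_ae hnn
      (hGint.sub (integrable_const t))).mp hint0
    haveI : (ae (volume.restrict (Set.Ioo (0:ℝ) (1/2)))).NeBot := ae_neBot.mpr hμne
    obtain ⟨θ₀, h1, h2⟩ := (hzero.and (ae_restrict_mem measurableSet_Ioo)).exists
    simp only [Pi.zero_apply] at h1
    have := hcon θ₀ h2
    linarith
  obtain ⟨θ, hθmem, hθle⟩ := hex
  obtain ⟨hθ1, hθ2⟩ := hθmem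
  -- indicator functions
  have hmZ : Measurable (fun x => if c x < θ then (1:ℝ) else 0) :=
    Measurable.ite (measurableSet_lt hcm measurable_const) measurable_const measurable_const
  have hmM : Measurable (fun x => if c x < θ then (0:ℝ) else if c x ≤ 1 - θ then 1 else 0) :=
    Measurable.ite (measurableSet_lt hcm measurable_const) measurable_const
      (Measurable.ite (measurableSet_le hcm measurable_const) measurable_const measurable_const)
  have hmA : Measurable (fun x => if 1 - θ < c x then (1:ℝ) else 0) :=
    Measurable.ite (measurableSet_lt measurable_const hcm) measurable_const measurable_const
  have hiZ : Integrable (fun x => if c x < θ then (1:ℝ) else 0) ν :=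
    integrable_of_bdd hmZ.aestronglyMeasurable 1
      (fun x => by rw [Real.norm_eq_abs, abs_le]; constructor <;> split_ifs <;> norm_num)
  have hiM : Integrable (fun x => if c x < θ then (0:ℝ) else if c x ≤ 1 - θ then 1 else 0) ν :=
    integrable_of_bdd hmM.aestronglyMeasurable 1
      (fun x => by rw [Real.norm_eq_abs, abs_le]; constructor <;> split_ifs <;> norm_num)
  have hiA : Integrable (fun x => if 1 - θ < c x then (1:ℝ) else 0) ν :=
    integrable_of_bdd hmA.aestronglyMeasurable 1
      (fun x => by rw [Real.norm_eq_abs, abs_le]; constructor <;> split_ifs <;> norm_num)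
  set z := ∫ x, (if c x < θ then (1:ℝ) else 0) ∂ν with hz_def
  set b := ∫ x, (if c x < θ then (0:ℝ) else if c x ≤ 1 - θ then 1 else 0) ∂ν with hb_def
  set a := ∫ x, (if 1 - θ < c x then (1:ℝ) else 0) ∂ν with ha_def
  have ha0 : 0 ≤ a := integral_nonneg fun x => by dsimp; split_ifs <;> norm_num
  have hb0 : 0 ≤ b := integral_nonneg fun x => by dsimp; split_ifs <;> norm_num
  have hz0 : 0 ≤ z := integral_nonneg fun x => by dsimp; split_ifs <;> norm_num
  have hsum : a + b + z = 1 := by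
    have h1 : ∫ x, ((if c x < θ then (1:ℝ) else 0)
        + (if c x < θ then (0:ℝ) else if c x ≤ 1 - θ then 1 else 0)
        + (if 1 - θ < c x then (1:ℝ) else 0)) ∂ν = 1 := by
      rw [integral_congr_ae (Filter.Eventually.of_forall fun x => tri_ind θ (c x) hθ2)]
      simp
    have i1 : ∫ x, ((if c x < θ then (1:ℝ) else 0)
        + (if c x < θ then (0:ℝ) else if c x ≤ 1 - θ then 1 else 0)
        + (if 1 - θ < c x then (1:ℝ) else 0)) ∂ν
        = (∫ x, ((if c x < θ then (1:ℝ) else 0)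
            + (if c x < θ then (0:ℝ) else if c x ≤ 1 - θ then 1 else 0)) ∂ν)
          + ∫ x, (if 1 - θ < c x then (1:ℝ) else 0) ∂ν := integral_add (hiZ.add hiM) hiA
    have i2 : ∫ x, ((if c x < θ then (1:ℝ) else 0)
        + (if c x < θ then (0:ℝ) else if c x ≤ 1 - θ then 1 else 0)) ∂ν
        = (∫ x, (if c x < θ then (1:ℝ) else 0) ∂ν)
          + ∫ x, (if c x < θ then (0:ℝ) else if c x ≤ 1 - θ then 1 else 0) ∂ν :=
      integral_add hiZ hiM
    rw [ha_def, hb_def, hz_def]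
    rw [i1, i2] at h1
    linarith
  have hab : a + b / 2 ≤ t := by
    have h1 : ∫ x, ((if 1 - θ < c x then (1:ℝ) else 0)
        + 1 / 2 * (if c x < θ then (0:ℝ) else if c x ≤ 1 - θ then 1 else 0)) ∂ν
        = a + 1 / 2 * b := by
      rw [integral_add hiA (hiM.const_mul _), integral_const_mul]
    rw [h1] at hθle
    linarith
  -- the density bound
  have hWm : Measurable fun p : Ω × Ω => W p.1 p.2 := hW.1
  have hWint : Integrable (fun p : Ω × Ω => W p.1 p.2) (ν.prod ν) :=
    integrable_of_bdd hWm.aestronglyMeasurable 1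
      (fun p => by
        rw [Real.norm_eq_abs, abs_le]
        exact ⟨by linarith [(hW.2.2 p.1 p.2).1], (hW.2.2 p.1 p.2).2⟩)
  have hRint : Integrable (fun p : Ω × Ω =>
      1 - (if c p.1 < θ then (1:ℝ) else 0) * (if c p.2 < θ then (1:ℝ) else 0)
        - (if c p.1 < θ then (1:ℝ) else 0)
            * (if c p.2 < θ then (0:ℝ) else if c p.2 ≤ 1 - θ then 1 else 0)
        - (if c p.1 < θ then (0:ℝ) else if c p.1 ≤ 1 - θ then 1 else 0)
            * (if c p.2 < θ then (1:ℝ) else 0)) (ν.prod ν) :=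
    (((integrable_const 1).sub (hiZ.mul_prod hiZ)).sub (hiZ.mul_prod hiM)).sub
      (hiM.mul_prod hiZ)
  have hle : e ≤ 1 - z * z - z * b - b * z := by
    have h1 : e ≤ ∫ p : Ω × Ω, (1 - (if c p.1 < θ then (1:ℝ) else 0)
          * (if c p.2 < θ then (1:ℝ) else 0)
        - (if c p.1 < θ then (1:ℝ) else 0)
            * (if c p.2 < θ then (0:ℝ) else if c p.2 ≤ 1 - θ then 1 else 0)
        - (if c p.1 < θ then (0:ℝ) else if c p.1 ≤ 1 - θ then 1 else 0)
            * (if c p.2 < θ then (1:ℝ) else 0)) ∂(ν.prod ν) := by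
      rw [he]
      apply integral_mono_ae hWint hRint
      filter_upwards [hcov] with p hp
      exact master_pt θ (c p.1) (c p.2) (W p.1 p.2) hθ1 hθ2 (hW.2.2 p.1 p.2).2 hp
    have h2 : ∫ p : Ω × Ω, (1 - (if c p.1 < θ then (1:ℝ) else 0)
          * (if c p.2 < θ then (1:ℝ) else 0)
        - (if c p.1 < θ then (1:ℝ) else 0)
            * (if c p.2 < θ then (0:ℝ) else if c p.2 ≤ 1 - θ then 1 else 0)
        - (if c p.1 < θ then (0:ℝ) else if c p.1 ≤ 1 - θ then 1 else 0)
            * (if c p.2 < θ then (1:ℝ) else 0)) ∂(ν.prod ν)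
        = 1 - z * z - z * b - b * z := by
      have j1 : ∫ p : Ω × Ω, ((1 - (if c p.1 < θ then (1:ℝ) else 0)
            * (if c p.2 < θ then (1:ℝ) else 0)
          - (if c p.1 < θ then (1:ℝ) else 0)
              * (if c p.2 < θ then (0:ℝ) else if c p.2 ≤ 1 - θ then 1 else 0))
          - (if c p.1 < θ then (0:ℝ) else if c p.1 ≤ 1 - θ then 1 else 0)
              * (if c p.2 < θ then (1:ℝ) else 0)) ∂(ν.prod ν)
          = (∫ p : Ω × Ω, (1 - (if c p.1 < θ then (1:ℝ) else 0)
              * (if c p.2 < θ then (1:ℝ) else 0)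
            - (if c p.1 < θ then (1:ℝ) else 0)
                * (if c p.2 < θ then (0:ℝ) else if c p.2 ≤ 1 - θ then 1 else 0)) ∂(ν.prod ν))
            - ∫ p : Ω × Ω, ((if c p.1 < θ then (0:ℝ) else if c p.1 ≤ 1 - θ then 1 else 0)
                * (if c p.2 < θ then (1:ℝ) else 0)) ∂(ν.prod ν) :=
        integral_sub (((integrable_const 1).sub (hiZ.mul_prod hiZ)).sub (hiZ.mul_prod hiM))
          (hiM.mul_prod hiZ)
      have j2 : ∫ p : Ω × Ω, ((1 - (if c p.1 < θ then (1:ℝ) else 0)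
            * (if c p.2 < θ then (1:ℝ) else 0))
          - (if c p.1 < θ then (1:ℝ) else 0)
              * (if c p.2 < θ then (0:ℝ) else if c p.2 ≤ 1 - θ then 1 else 0)) ∂(ν.prod ν)
          = (∫ p : Ω × Ω, (1 - (if c p.1 < θ then (1:ℝ) else 0)
              * (if c p.2 < θ then (1:ℝ) else 0)) ∂(ν.prod ν))
            - ∫ p : Ω × Ω, ((if c p.1 < θ then (1:ℝ) else 0)
                * (if c p.2 < θ then (0:ℝ) else if c p.2 ≤ 1 - θ then 1 else 0)) ∂(ν.prod ν) :=
        integral_sub ((integrable_const 1).sub (hiZ.mul_prod hiZ)) (hiZ.mul_prod hiM)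
      have j3 : ∫ p : Ω × Ω, ((1:ℝ) - (if c p.1 < θ then (1:ℝ) else 0)
            * (if c p.2 < θ then (1:ℝ) else 0)) ∂(ν.prod ν)
          = (∫ _p : Ω × Ω, (1:ℝ) ∂(ν.prod ν))
            - ∫ p : Ω × Ω, ((if c p.1 < θ then (1:ℝ) else 0)
                * (if c p.2 < θ then (1:ℝ) else 0)) ∂(ν.prod ν) :=
        integral_sub (integrable_const 1) (hiZ.mul_prod hiZ)
      have j4 : ∫ p : Ω × Ω, ((if c p.1 < θ then (1:ℝ) else 0)
          * (if c p.2 < θ then (1:ℝ) else 0)) ∂(ν.prod ν) = z * z :=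
        integral_prod_mul (fun x => if c x < θ then (1:ℝ) else 0)
          (fun x => if c x < θ then (1:ℝ) else 0)
      have j5 : ∫ p : Ω × Ω, ((if c p.1 < θ then (1:ℝ) else 0)
          * (if c p.2 < θ then (0:ℝ) else if c p.2 ≤ 1 - θ then 1 else 0)) ∂(ν.prod ν)
          = z * b :=
        integral_prod_mul (fun x => if c x < θ then (1:ℝ) else 0)
          (fun x => if c x < θ then (0:ℝ) else if c x ≤ 1 - θ then 1 else 0)
      have j6 : ∫ p : Ω × Ω, ((if c p.1 < θ then (0:ℝ) else if c p.1 ≤ 1 - θ then 1 else 0)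
          * (if c p.2 < θ then (1:ℝ) else 0)) ∂(ν.prod ν) = b * z :=
        integral_prod_mul (fun x => if c x < θ then (0:ℝ) else if c x ≤ 1 - θ then 1 else 0)
          (fun x => if c x < θ then (1:ℝ) else 0)
      have j7 : ∫ _p : Ω × Ω, (1:ℝ) ∂(ν.prod ν) = 1 := by simp
      rw [j1, j2, j3, j4, j5, j6, j7]
    linarith
  exact final_alg a b z t e ha0 hb0 hz0 hsum hab ht0 hle
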